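/- Let N ≥ 1 be an integer and c > 0 with c·N·(N+1) < 1, and set b = 1 − √(c·N·(N+1)). Then b is the unique point in (0,1) satisfying ∫_b^1 ((x − b)/(1 − b))^(N−1)·(1 − x) dx = c, and the efficient prize satisfies N·c/(1 − b) = √(N·c/(N+1)). (The planner's optimum and efficient prize for the uniform distribution on [0,1].) -/

import Mathlib

open intervalIntegral

lemma key_int (M : ℕ) (b' : ℝ) (hb' : b' < 1) :
    (∫ x in b'..1, ((x - b') / (1 - b')) ^ M * (1 - x))
      = (1 - b')^2 / ((M+1)*(M+2)) := by
  have hd : (0:ℝ) < 1 - b' := by linarith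
  set d := 1 - b' with hdef
  have h0 : (∫ x in b'..1, ((x - b') / d) ^ M * (1 - x))
      = ∫ u in (0:ℝ)..d, (u / d) ^ M * (d - u) := by
    have := intervalIntegral.integral_comp_sub_right
      (a := b') (b := 1) (f := fun u => (u / d) ^ M * (d - u)) b'
    rw [show b' - b' = (0:ℝ) by ring, show 1 - b' = d from rfl] at this
    rw [← this]
    congr 1
    ext x
    congr 1
    rw [hdef]; ring
  rw [h0]
  have h1 : ∀ u : ℝ, (u / d) ^ M * (d - u) = (d * u ^ M - u ^ (M+1)) / d ^ M := by
    intro u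
    rw [div_pow, div_mul_eq_mul_div]
    ring
  simp_rw [h1]
  rw [intervalIntegral.integral_div]
  rw [intervalIntegral.integral_sub (f := fun x : ℝ => d * x ^ M) ((continuous_const.mul (continuous_pow M)).intervalIntegrable _ _) ((continuous_pow (M+1)).intervalIntegrable _ _)]
  rw [intervalIntegral.integral_const_mul, integral_pow, integral_pow]
  have hdM : d ^ M ≠ 0 := pow_ne_zero _ hd.ne'
  field_simp
  push_cast
  ring

/-- Planner's optimum and efficient prize for the uniform distribution on
`[0,1]`: `b = 1 − √(c·N·(N+1))` is the unique point of `(0,1)` satisfying the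
planner first-order condition `∫_b^1 ((x−b)/(1−b))^(N−1)·(1−x) dx = c`, and
the efficient prize is `N·c/(1−b) = √(N·c/(N+1))`. -/
theorem stmt_18
    (N : ℕ) (hN : 1 ≤ N)
    (c : ℝ) (hc : 0 < c)
    (hsmall : c * N * (N + 1) < 1)
    (b : ℝ) (hb : b = 1 - Real.sqrt (c * N * (N + 1))) :
    b ∈ Set.Ioo (0:ℝ) 1 ∧
    (∫ x in b..1, ((x - b) / (1 - b)) ^ (N - 1) * (1 - x)) = c ∧
    (∀ b' ∈ Set.Ioo (0:ℝ) 1,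
      (∫ x in b'..1, ((x - b') / (1 - b')) ^ (N - 1) * (1 - x)) = c → b' = b) ∧
    (N : ℝ) * c / (1 - b) = Real.sqrt ((N : ℝ) * c / (N + 1)) := by
  obtain ⟨M, rfl⟩ : ∃ M, N = M + 1 := ⟨N - 1, (Nat.succ_pred_eq_of_pos hN).symm⟩
  push_cast at hsmall hb
  have hNpos : (0:ℝ) < (M:ℝ) + 1 := by positivity
  set s := Real.sqrt (c * ((M:ℝ)+1) * (((M:ℝ)+1) + 1)) with hs
  have harg : (0:ℝ) < c * ((M:ℝ)+1) * (((M:ℝ)+1) + 1) := by positivity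
  have hs2 : s ^ 2 = c * ((M:ℝ)+1) * (((M:ℝ)+1) + 1) := Real.sq_sqrt harg.le
  have hspos : 0 < s := Real.sqrt_pos.mpr harg
  have hslt1 : s < 1 := by nlinarith [hs2]
  have hbval : b = 1 - s := hb
  have hbIoo : b ∈ Set.Ioo (0:ℝ) 1 := by
    constructor <;> [linarith; linarith]
  have hMsub : (M + 1) - 1 = M := rfl
  refine ⟨hbIoo, ?_, ?_, ?_⟩
  · rw [hMsub, key_int M b hbIoo.2, hbval]
    have : (1 - (1 - s)) ^ 2 = s ^ 2 := by ring
    rw [this, hs2]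
    field_simp
    ring
  · intro b' hb' heq
    rw [hMsub, key_int M b' hb'.2] at heq
    have h2 : (1 - b') ^ 2 = s ^ 2 := by
      rw [hs2]
      have hne : ((M:ℝ)+1) * ((M:ℝ)+2) ≠ 0 := by positivity
      field_simp at heq
      nlinarith [heq]
    have hpos' : 0 < 1 - b' := by linarith [hb'.2]
    have : 1 - b' = s := by
      nlinarith [h2, hpos', hspos]
    linarith [this, hbval]
  · rw [hbval]
    have h1 : (1:ℝ) - (1 - s) = s := by ring
    rw [h1]
    have hkey : (((M:ℝ)+1) * c / s) ^ 2 = ((M:ℝ)+1) * c / (((M:ℝ)+1) + 1) := by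
      rw [div_pow, hs2]
      field_simp
    push_cast
    rw [← hkey, Real.sqrt_sq (by positivity)]
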